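/- arXiv:0812.2870 — 2 statements merged into one kernel-verified Lean document; each statement's English description precedes it below -/
import Mathlib

section
/- In the pizza game on a pizza with an odd number of pieces, Alice has a strategy guaranteeing her at least one third of the total size of the pizza. -/
/-!
Pizza game model.  Pieces are indexed by `ZMod n`.  A play is determined by
Alice's starting piece `p` and a sequence of direction choices
`d : ℕ → Bool`: the choice `d t` determines the piece eaten at move `t+1`
(`true` = clockwise end of the eaten interval, `false` = counterclockwise).
Moves are numbered `0, …, n-1`; Alice moves at even indices, Bob at odd ones,
so the choice `d t` is made by Bob when `t` is even and by Alice when `t` is odd.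
A strategy is a function from the list of previous direction choices to a choice.
-/

/-- The history of direction choices after `t` choices, when Alice plays `σ`
and Bob plays `τ`. -/
def hist (σ τ : List Bool → Bool) : ℕ → List Bool
  | 0 => []
  | t + 1 => hist σ τ t ++ [if Even t then τ (hist σ τ t) else σ (hist σ τ t)]

/-- The direction chosen at step `t` (determining the piece eaten at move `t+1`,
which belongs to Alice iff `t` is odd): Bob chooses it if `t` is even,
Alice if `t` is odd. -/
def choice (σ τ : List Bool → Bool) (t : ℕ) : Bool :=
  if Even t then τ (hist σ τ t) else σ (hist σ τ t)

/-- The piece eaten at move `t`, given starting piece `p` and direction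
choices `d`. -/
def piece (n : ℕ) (p : ZMod n) (d : ℕ → Bool) : ℕ → ZMod n
  | 0 => p
  | t + 1 =>
      if d t then
        p + ((((Finset.range (t + 1)).filter fun i => d i = true).card : ℕ) : ZMod n)
      else
        p - ((((Finset.range (t + 1)).filter fun i => d i = false).card : ℕ) : ZMod n)

/-- Alice's outcome: total size of the pieces eaten at even-numbered moves. -/
noncomputable def aliceOutcome (n : ℕ) [NeZero n] (s : ZMod n → ℝ) (p : ZMod n)
    (σ τ : List Bool → Bool) : ℝ :=
  ∑ t ∈ Finset.range n, if Even t then s (piece n p (choice σ τ) t) else 0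

/-- Bob's outcome: total size of the pieces eaten at odd-numbered moves. -/
noncomputable def bobOutcome (n : ℕ) [NeZero n] (s : ZMod n → ℝ) (p : ZMod n)
    (σ τ : List Bool → Bool) : ℝ :=
  ∑ t ∈ Finset.range n, if Even t then 0 else s (piece n p (choice σ τ) t)

/-- The follow-Bob strategy: Alice always repeats Bob's previous direction
choice, i.e. she picks the piece just revealed by Bob. -/
def followBob : List Bool → Bool := fun L => L.getLastD true

/-! ### Auxiliary development for the proof -/


noncomputable def Wsum (M : ℕ) {n : ℕ} (s' : ZMod n → ℝ) (x : ZMod n) : ℝ :=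
  ∑ j ∈ Finset.range (M + 1), s' (x + (j : ℕ))

lemma cover3 {n M : ℕ} [NeZero n] (s' : ZMod n → ℝ) (hs : ∀ i, 0 ≤ s' i)
    (x1 x2 x3 : ZMod n)
    (hcov : ∀ r : ZMod n, ∃ j : ℕ, j ≤ M ∧
      (r = x1 + (j : ℕ) ∨ r = x2 + (j : ℕ) ∨ r = x3 + (j : ℕ))) :
    (∑ i, s' i) ≤ Wsum M s' x1 + Wsum M s' x2 + Wsum M s' x3 := by
  classical
  set X : ℕ → ZMod n := fun i => if i = 0 then x1 else if i = 1 then x2 else x3 with hX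
  have key : ∀ r : ZMod n, ∃ q : ℕ × ℕ, q.1 < 3 ∧ q.2 < M + 1 ∧ r = X q.1 + (q.2 : ℕ) := by
    intro r
    obtain ⟨j, hj, h⟩ := hcov r
    rcases h with h | h | h
    · exact ⟨(0, j), by omega, by omega, by simpa [hX] using h⟩
    · exact ⟨(1, j), by omega, by omega, by simpa [hX] using h⟩
    · exact ⟨(2, j), by omega, by omega, by simpa [hX] using h⟩
  choose e he1 he2 he3 using key
  have h1 : ∑ i, s' i = ∑ r : ZMod n, s' (X (e r).1 + ((e r).2 : ℕ)) :=
    Finset.sum_congr rfl fun r _ => by rw [← he3 r]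
  have h2 : ∑ r : ZMod n, s' (X (e r).1 + ((e r).2 : ℕ))
      = ∑ q ∈ Finset.univ.image e, s' (X q.1 + (q.2 : ℕ)) := by
    rw [Finset.sum_image]
    intro a _ b _ hab
    rw [he3 a, he3 b, hab]
  have h3 : ∑ q ∈ Finset.univ.image e, s' (X q.1 + (q.2 : ℕ))
      ≤ ∑ q ∈ Finset.range 3 ×ˢ Finset.range (M + 1), s' (X q.1 + (q.2 : ℕ)) := by
    apply Finset.sum_le_sum_of_subset_of_nonneg
    · intro q hq
      obtain ⟨r, _, rfl⟩ := Finset.mem_image.mp hq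
      exact Finset.mem_product.mpr ⟨Finset.mem_range.mpr (he1 r), Finset.mem_range.mpr (he2 r)⟩
    · intro _ _ _
      exact hs _
  have h4 : ∑ q ∈ Finset.range 3 ×ˢ Finset.range (M + 1), s' (X q.1 + (q.2 : ℕ))
      = Wsum M s' x1 + Wsum M s' x2 + Wsum M s' x3 := by
    rw [Finset.sum_product]
    rw [show (3 : ℕ) = 2 + 1 by rfl, Finset.sum_range_succ, Finset.sum_range_succ,
      Finset.sum_range_one]
    simp [hX, Wsum]
  rw [h1, h2, ← h4]
  exact h3

set_option maxHeartbeats 1000000 in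
lemma window_main (n M : ℕ) [NeZero n] (hn : n = 2 * M + 1) (s' : ZMod n → ℝ)
    (hs : ∀ i, 0 ≤ s' i) :
    ∃ x : ZMod n, ∀ k : ℕ, k ≤ M → (∑ i, s' i) / 3 ≤ Wsum M s' (x + (k : ℕ)) := by
  classical
  by_contra hcon
  push_neg at hcon
  obtain ⟨k0, hk0, hbad0⟩ := hcon 0
  set T : ℝ := ∑ i, s' i with hT
  set b0 : ZMod n := 0 + ((k0 : ℕ) : ZMod n) with hb0
  set P : ℕ → Prop := fun i => Wsum M s' (b0 + ((i : ℕ) : ZMod n)) < T / 3 with hPdef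
  have hPval : ∀ i : ℕ, P i → Wsum M s' (b0 + ((i : ℕ) : ZMod n)) < T / 3 := fun i h => h
  have hPmk : ∀ i : ℕ, Wsum M s' (b0 + ((i : ℕ) : ZMod n)) < T / 3 → P i := fun i h => h
  have hP0 : P 0 := by
    apply hPmk
    simpa using hbad0
  have F1 : ∀ i : ℕ, ∃ k, k ≤ M ∧ P (i + 1 + k) := by
    intro i
    obtain ⟨k, hk, hb⟩ := hcon (b0 + ((i + 1 : ℕ) : ZMod n))
    refine ⟨k, hk, hPmk _ ?_⟩
    have he : b0 + ((i + 1 : ℕ) : ZMod n) + ((k : ℕ) : ZMod n)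
        = b0 + ((i + 1 + k : ℕ) : ZMod n) := by
      push_cast
      ring
    rw [← he]
    exact hb
  have hres : ∀ (z r : ZMod n), r = z + (((r - z).val : ℕ) : ZMod n) := by
    intro z r
    rw [ZMod.natCast_val, ZMod.cast_id]
    ring
  have F2 : ∀ i g2 : ℕ, (g2 = M ∨ g2 = M + 1) → P i → P (i + g2) → False := by
    intro i g2 hg2 hi hig
    have hcov : ∀ r : ZMod n, ∃ j : ℕ, j ≤ M ∧
        (r = (b0 + ((i : ℕ) : ZMod n)) + (j : ℕ) ∨
         r = (b0 + ((i + g2 : ℕ) : ZMod n)) + (j : ℕ) ∨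
         r = (b0 + ((i + g2 : ℕ) : ZMod n)) + (j : ℕ)) := by
      intro r
      have htn : (r - (b0 + ((i : ℕ) : ZMod n))).val < n := ZMod.val_lt _
      set t := (r - (b0 + ((i : ℕ) : ZMod n))).val with htdef
      have hrt : r = (b0 + ((i : ℕ) : ZMod n)) + ((t : ℕ) : ZMod n) := hres _ r
      by_cases hc : t ≤ M
      · exact ⟨t, hc, Or.inl hrt⟩
      · refine ⟨t - g2, by omega, Or.inr (Or.inl ?_)⟩
        rw [hrt]
        have hg2t : g2 ≤ t := by omega
        push_cast [Nat.cast_sub hg2t]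
        ring
    have hle := cover3 s' hs _ _ _ hcov
    have h1 := hPval _ hi
    have h2 := hPval _ hig
    rw [← hT] at hle
    linarith
  have hn0 : 0 < n := by omega
  set I : Finset ℕ := (Finset.range (n + 1)).filter P with hI
  have hmemI : ∀ i : ℕ, i ∈ I ↔ i ≤ n ∧ P i := by
    intro i
    simp [hI, Nat.lt_succ_iff]
  have h0I : 0 ∈ I := (hmemI 0).mpr ⟨by omega, hP0⟩
  have hnI : n ∈ I := by
    refine (hmemI n).mpr ⟨le_refl n, hPmk _ ?_⟩
    have h1 : ((n : ℕ) : ZMod n) = ((0 : ℕ) : ZMod n) := by simp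
    rw [h1]
    exact hPval 0 hP0
  set nxt : ℕ → ℕ := fun i =>
    (insert n (I.filter (fun x => i < x))).min' ⟨n, Finset.mem_insert_self n _⟩ with hnxt
  have hnxt_mem : ∀ i : ℕ, nxt i ∈ insert n (I.filter (fun x => i < x)) := fun i =>
    Finset.min'_mem _ _
  have hnxtI : ∀ i : ℕ, nxt i ∈ I := by
    intro i
    rcases Finset.mem_insert.mp (hnxt_mem i) with h | h
    · rw [h]; exact hnI
    · exact (Finset.mem_filter.mp h).1
  have hnxt_gt : ∀ i : ℕ, i < n → i < nxt i := by
    intro i hi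
    rcases Finset.mem_insert.mp (hnxt_mem i) with h | h
    · omega
    · exact (Finset.mem_filter.mp h).2
  have hnxt_le : ∀ i x : ℕ, x ∈ I → i < x → nxt i ≤ x := by
    intro i x hx hix
    exact Finset.min'_le _ _ (Finset.mem_insert.mpr (Or.inr (Finset.mem_filter.mpr ⟨hx, hix⟩)))
  have hnxt_len : ∀ i : ℕ, nxt i ≤ n := fun i =>
    Finset.min'_le _ _ (Finset.mem_insert_self _ _)
  have gap_le : ∀ i : ℕ, i ∈ I → i < n → nxt i ≤ i + M + 1 := by
    intro i hiI hilt
    by_cases hc : i + M + 1 ≤ n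
    · obtain ⟨k, hk, hPk⟩ := F1 i
      have hmem : i + 1 + k ∈ I := (hmemI _).mpr ⟨by omega, hPk⟩
      have := hnxt_le i _ hmem (by omega)
      omega
    · have := hnxt_len i
      omega
  have gap_small : ∀ i : ℕ, i ∈ I → i < n → nxt i + 1 ≤ i + M := by
    intro i hiI hilt
    have h1 := gap_le i hiI hilt
    have h3 := hnxt_gt i hilt
    have hPi : P i := ((hmemI i).mp hiI).2
    have hPnxt : P (nxt i) := ((hmemI _).mp (hnxtI i)).2
    by_contra hcon2
    have hor : nxt i - i = M ∨ nxt i - i = M + 1 := by omega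
    have : i + (nxt i - i) = nxt i := by omega
    exact F2 i (nxt i - i) hor hPi (by rw [this]; exact hPnxt)
  have hM2 : 2 ≤ M := by
    have h := gap_small 0 h0I hn0
    have := hnxt_gt 0 hn0
    omega
  obtain ⟨g, a, haI, haln, hag, hg_ge⟩ :
      ∃ g a, a ∈ I ∧ a < n ∧ nxt a - a = g ∧ ∀ i ∈ I, i < n → nxt i - i ≤ g := by
    have hDne : ((I.filter (fun i => i < n)).image (fun i => nxt i - i)).Nonempty :=
      ⟨nxt 0 - 0, Finset.mem_image.mpr ⟨0, Finset.mem_filter.mpr ⟨h0I, hn0⟩, rfl⟩⟩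
    obtain ⟨a, haf, hag⟩ := Finset.mem_image.mp (Finset.max'_mem _ hDne)
    refine ⟨_, a, (Finset.mem_filter.mp haf).1, (Finset.mem_filter.mp haf).2, hag, ?_⟩
    intro i hiI hilt
    exact Finset.le_max' ((I.filter (fun i => i < n)).image (fun i => nxt i - i)) (nxt i - i)
      (Finset.mem_image.mpr ⟨i, Finset.mem_filter.mpr ⟨hiI, hilt⟩, rfl⟩)
  have hg1 : 1 ≤ g := by
    have := hnxt_gt a haln
    omega
  have hgM : g + 1 ≤ M := by
    have h1 := gap_small a haI haln
    have h2 := hnxt_gt a haln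
    omega
  have hb : nxt a = a + g := by
    have := hnxt_gt a haln
    omega
  have hPa : P a := ((hmemI a).mp haI).2
  have hPb : P (a + g) := by
    rw [← hb]
    exact ((hmemI _).mp (hnxtI a)).2
  have hagn : a + g ≤ n := by
    rw [← hb]
    exact hnxt_len a
  have P1 : ∀ u : ℕ, u + g ≤ n + 1 → ∃ c, c ∈ I ∧ u ≤ c ∧ c < u + g := by
    intro u hu
    rcases Nat.eq_zero_or_pos u with h | h
    · exact ⟨0, h0I, by omega, by omega⟩
    · have hQne : (I.filter (fun x => x < u)).Nonempty := ⟨0, Finset.mem_filter.mpr ⟨h0I, h⟩⟩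
      obtain ⟨q, hqI, hqu, hqmax⟩ : ∃ q, q ∈ I ∧ q < u ∧ ∀ x ∈ I, x < u → x ≤ q := by
        refine ⟨(I.filter (fun x => x < u)).max' hQne, ?_, ?_, ?_⟩
        · exact (Finset.mem_filter.mp (Finset.max'_mem _ hQne)).1
        · exact (Finset.mem_filter.mp (Finset.max'_mem _ hQne)).2
        · intro x hxI hxu
          exact Finset.le_max' (I.filter (fun x => x < u)) x (Finset.mem_filter.mpr ⟨hxI, hxu⟩)
      have hqn : q < n := by
        have h2 := (hmemI q).mp hqI
        omega
      refine ⟨nxt q, hnxtI q, ?_, ?_⟩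
      · by_contra hlt
        push_neg at hlt
        have h2 : nxt q ≤ q := hqmax _ (hnxtI q) hlt
        have := hnxt_gt q hqn
        omega
      · have h2 := hg_ge q hqI hqn
        have := hnxt_gt q hqn
        omega
  have hthird : ∃ c o3 : ℕ, c ∈ I ∧ M ≤ o3 ∧ o3 ≤ M + g + 1 ∧
      ((c : ℕ) : ZMod n) = ((a : ℕ) : ZMod n) + ((o3 : ℕ) : ZMod n) := by
    by_cases hA : M ≤ a + g ∧ a ≤ M + 1
    · refine ⟨0, n - a, h0I, by omega, by omega, ?_⟩
      have h2 : ((a : ℕ) : ZMod n) + ((n - a : ℕ) : ZMod n) = ((n : ℕ) : ZMod n) := by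
        rw [← Nat.cast_add]
        congr 1
        omega
      rw [h2, ZMod.natCast_self, Nat.cast_zero]
    · by_cases hB : a + g + 1 ≤ M
      · obtain ⟨c, hcI, hc1, hc2⟩ := P1 (a + M + 1) (by omega)
        refine ⟨c, c - a, hcI, by omega, by omega, ?_⟩
        have hac : a ≤ c := by omega
        push_cast [Nat.cast_sub hac]
        ring
      · have haM : M + 2 ≤ a := by omega
        obtain ⟨c, hcI, hc1, hc2⟩ := P1 (a - M) (by omega)
        refine ⟨c, c + n - a, hcI, by omega, by omega, ?_⟩
        have h1 : a ≤ c + n := by omega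
        push_cast [Nat.cast_sub h1, ZMod.natCast_self]
        ring
  obtain ⟨c, o3, hcI, ho3M, ho3ub, hco⟩ := hthird
  have hcov : ∀ r : ZMod n, ∃ j : ℕ, j ≤ M ∧
      (r = (b0 + ((a : ℕ) : ZMod n)) + (j : ℕ) ∨
       r = (b0 + ((a + g : ℕ) : ZMod n)) + (j : ℕ) ∨
       r = (b0 + ((c : ℕ) : ZMod n)) + (j : ℕ)) := by
    intro r
    have htn : (r - (b0 + ((a : ℕ) : ZMod n))).val < n := ZMod.val_lt _
    set t := (r - (b0 + ((a : ℕ) : ZMod n))).val with htdef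
    have hrt : r = (b0 + ((a : ℕ) : ZMod n)) + ((t : ℕ) : ZMod n) := hres _ r
    rcases le_or_gt t M with h | h
    · exact ⟨t, h, Or.inl hrt⟩
    · rcases lt_or_ge t o3 with h2 | h2
      · refine ⟨t - g, by omega, Or.inr (Or.inl ?_)⟩
        rw [hrt]
        have hgt : g ≤ t := by omega
        push_cast [Nat.cast_sub hgt]
        ring
      · refine ⟨t - o3, by omega, Or.inr (Or.inr ?_)⟩
        rw [hrt, hco]
        have hot : o3 ≤ t := h2
        push_cast [Nat.cast_sub hot]
        ring
  have hle := cover3 s' hs _ _ _ hcov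
  have h1 := hPval _ hPa
  have h2 := hPval _ hPb
  have h3 := hPval _ (((hmemI c).mp hcI).2)
  rw [← hT] at hle
  linarith

lemma hist_succ (σ τ : List Bool → Bool) (t : ℕ) :
    hist σ τ (t + 1) = hist σ τ t ++ [choice σ τ t] := rfl

lemma choice_pair (τ : List Bool → Bool) (k : ℕ) :
    choice followBob τ (2 * k + 1) = choice followBob τ (2 * k) := by
  have hodd : ¬ Even (2 * k + 1) := by simp [parity_simps]
  have h1 : choice followBob τ (2 * k + 1) = followBob (hist followBob τ (2 * k + 1)) := by
    unfold choice
    rw [if_neg hodd]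
  rw [h1, hist_succ]
  simp [followBob]

lemma count_pair (d : ℕ → Bool) (hd : ∀ i, d (2 * i + 1) = d (2 * i)) (b : Bool) (k : ℕ) :
    ((Finset.range (2 * k)).filter (fun i => d i = b)).card
      = 2 * ((Finset.range k).filter (fun i => d (2 * i) = b)).card := by
  rw [Finset.card_filter, Finset.card_filter]
  induction k with
  | zero => simp
  | succ k ih =>
    rw [show 2 * (k + 1) = (2 * k + 1) + 1 by ring]
    rw [Finset.sum_range_succ, Finset.sum_range_succ, Finset.sum_range_succ]
    rw [hd k]
    by_cases hq : d (2 * k) = b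
    · simp only [hq, if_pos]
      omega
    · simp only [hq, if_neg]
      omega

lemma piece_even (n : ℕ) (p : ZMod n) (d : ℕ → Bool) (hd : ∀ i, d (2 * i + 1) = d (2 * i))
    (k : ℕ) :
    piece n p d (2 * k + 2)
      = if d (2 * k)
        then p + ((2 * ((Finset.range (k + 1)).filter (fun i => d (2 * i) = true)).card : ℕ) : ZMod n)
        else p - ((2 * ((Finset.range (k + 1)).filter (fun i => d (2 * i) = false)).card : ℕ) : ZMod n) := by
  rw [show 2 * k + 2 = (2 * k + 1) + 1 by ring]
  rw [piece]
  rw [hd k]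
  rw [show (2 * k + 1) + 1 = 2 * (k + 1) by ring]
  rw [count_pair d hd true (k + 1), count_pair d hd false (k + 1)]

lemma sum_even_range (m : ℕ) (f : ℕ → ℝ) :
    (∑ t ∈ Finset.range (2 * m + 1), if Even t then f t else 0)
      = ∑ k ∈ Finset.range (m + 1), f (2 * k) := by
  induction m with
  | zero => simp
  | succ m ih =>
    rw [show 2 * (m + 1) + 1 = (2 * m + 1) + 1 + 1 by ring]
    rw [Finset.sum_range_succ, Finset.sum_range_succ, ih]
    have he : Even (2 * m + 1 + 1) := ⟨m + 1, by ring⟩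
    have ho : ¬ Even (2 * m + 1) := by simp [parity_simps]
    rw [if_pos he, if_neg ho]
    conv_rhs => rw [Finset.sum_range_succ]
    rw [show 2 * m + 1 + 1 = 2 * (m + 1) by ring]
    ring

lemma reorder (b : ℕ → Bool) (g h : ℕ → ℝ) (m : ℕ) :
    (∑ k ∈ Finset.range m,
        if b k then g (((Finset.range (k + 1)).filter (fun i => b i = true)).card)
        else h (((Finset.range (k + 1)).filter (fun i => b i = false)).card))
      = (∑ j ∈ Finset.range (((Finset.range m).filter (fun i => b i = true)).card), g (j + 1))
        + ∑ j ∈ Finset.range (((Finset.range m).filter (fun i => b i = false)).card), h (j + 1) := by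
  induction m with
  | zero => simp
  | succ m ih =>
    rw [Finset.sum_range_succ, ih]
    have hmT : m ∉ (Finset.range m).filter (fun i => b i = true) := by simp
    have hmF : m ∉ (Finset.range m).filter (fun i => b i = false) := by simp
    by_cases hb : b m = true
    · have hcT : ((Finset.range (m + 1)).filter (fun i => b i = true)).card
          = ((Finset.range m).filter (fun i => b i = true)).card + 1 := by
        rw [Finset.range_add_one, Finset.filter_insert, if_pos hb,
          Finset.card_insert_of_notMem hmT]
      have hcF : ((Finset.range (m + 1)).filter (fun i => b i = false)).card
          = ((Finset.range m).filter (fun i => b i = false)).card := by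
        rw [Finset.range_add_one, Finset.filter_insert, if_neg (by simp [hb])]
      rw [if_pos hb, hcT, hcF, Finset.sum_range_succ]
      ring
    · have hb' : b m = false := by simp at hb; exact hb
      have hcT : ((Finset.range (m + 1)).filter (fun i => b i = true)).card
          = ((Finset.range m).filter (fun i => b i = true)).card := by
        rw [Finset.range_add_one, Finset.filter_insert, if_neg (by simp [hb'])]
      have hcF : ((Finset.range (m + 1)).filter (fun i => b i = false)).card
          = ((Finset.range m).filter (fun i => b i = false)).card + 1 := by
        rw [Finset.range_add_one, Finset.filter_insert, if_pos hb',
          Finset.card_insert_of_notMem hmF]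
      rw [if_neg (by simp [hb']), hcT, hcF, Finset.sum_range_succ]
      ring

lemma outcome_eq (n M : ℕ) [NeZero n] (hn : n = 2 * M + 1) (s : ZMod n → ℝ)
    (p : ZMod n) (τ : List Bool → Bool) :
    ∃ A C : ℕ, A + C = M ∧
      aliceOutcome n s p followBob τ
        = s p + ((∑ j ∈ Finset.range A, s (p + ((2 * (j + 1) : ℕ) : ZMod n)))
          + ∑ j ∈ Finset.range C, s (p - ((2 * (j + 1) : ℕ) : ZMod n))) := by
  classical
  subst hn
  have hd : ∀ i, choice followBob τ (2 * i + 1) = choice followBob τ (2 * i) := fun i =>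
    choice_pair τ i
  refine ⟨((Finset.range M).filter (fun i => choice followBob τ (2 * i) = true)).card,
          ((Finset.range M).filter (fun i => choice followBob τ (2 * i) = false)).card, ?_, ?_⟩
  · have h1 := Finset.card_filter_add_card_filter_not
      (s := Finset.range M) (p := fun i => choice followBob τ (2 * i) = true)
    have h2 : (Finset.range M).filter (fun i => choice followBob τ (2 * i) = false)
        = (Finset.range M).filter (fun a => ¬ choice followBob τ (2 * a) = true) := by
      apply Finset.filter_congr
      intro i _
      simp [Bool.not_eq_true]
    rw [h2, h1, Finset.card_range]
  · unfold aliceOutcome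
    rw [sum_even_range M (fun t => s (piece (2 * M + 1) p (choice followBob τ) t)),
      Finset.sum_range_succ']
    have hp0 : piece (2 * M + 1) p (choice followBob τ) (2 * 0) = p := rfl
    rw [hp0]
    have hterm : ∀ k : ℕ,
        s (piece (2 * M + 1) p (choice followBob τ) (2 * (k + 1)))
          = if choice followBob τ (2 * k)
            then s (p + ((2 * (((Finset.range (k + 1)).filter
                (fun i => choice followBob τ (2 * i) = true)).card) : ℕ) : ZMod (2 * M + 1)))
            else s (p - ((2 * (((Finset.range (k + 1)).filter
                (fun i => choice followBob τ (2 * i) = false)).card) : ℕ) : ZMod (2 * M + 1))) := by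
      intro k
      rw [show 2 * (k + 1) = 2 * k + 2 by ring, piece_even (2 * M + 1) p _ hd k, apply_ite s]
    rw [Finset.sum_congr rfl (fun k _ => hterm k)]
    have hre := reorder (fun k => choice followBob τ (2 * k))
      (fun j => s (p + ((2 * j : ℕ) : ZMod (2 * M + 1))))
      (fun j => s (p - ((2 * j : ℕ) : ZMod (2 * M + 1)))) M
    beta_reduce at hre
    rw [hre]
    ring

lemma window_eq (n M : ℕ) [NeZero n] (s : ZMod n → ℝ) (x : ZMod n) (A B : ℕ)
    (hAB : A + B = M) :
    Wsum M (fun y => s (2 * y)) (x + (A : ZMod n))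
      = s (2 * (x + (M : ZMod n)))
        + ((∑ j ∈ Finset.range A, s (2 * (x + (M : ZMod n)) + ((2 * (j + 1) : ℕ) : ZMod n)))
          + ∑ j ∈ Finset.range B, s (2 * (x + (M : ZMod n)) - ((2 * (j + 1) : ℕ) : ZMod n))) := by
  have hM : ((M : ℕ) : ZMod n) = ((A : ℕ) : ZMod n) + ((B : ℕ) : ZMod n) := by
    rw [← Nat.cast_add, hAB]
  have h0 : Wsum M (fun y => s (2 * y)) (x + (A : ZMod n))
      = ∑ j ∈ Finset.range (M + 1), s (2 * (x + (A : ZMod n) + (j : ZMod n))) := rfl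
  rw [h0, show M + 1 = (B + 1) + A by omega, Finset.sum_range_add]
  have h1 : (∑ j ∈ Finset.range (B + 1), s (2 * (x + (A : ZMod n) + (j : ZMod n))))
      = s (2 * (x + (M : ZMod n)))
        + ∑ j ∈ Finset.range B, s (2 * (x + (M : ZMod n)) - ((2 * (j + 1) : ℕ) : ZMod n)) := by
    rw [← Finset.sum_range_reflect]
    rw [Finset.sum_range_succ']
    have h2 : ∀ j ∈ Finset.range B,
        s (2 * (x + (A : ZMod n) + ((B + 1 - 1 - (j + 1) : ℕ) : ZMod n)))
          = s (2 * (x + (M : ZMod n)) - ((2 * (j + 1) : ℕ) : ZMod n)) := by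
      intro j hj
      have hjB : j + 1 ≤ B := Finset.mem_range.mp hj
      congr 1
      rw [show B + 1 - 1 - (j + 1) = B - (j + 1) by omega]
      push_cast [Nat.cast_sub hjB, hM]
      ring
    rw [Finset.sum_congr rfl h2]
    have h3 : s (2 * (x + (A : ZMod n) + ((B + 1 - 1 - 0 : ℕ) : ZMod n)))
        = s (2 * (x + (M : ZMod n))) := by
      congr 1
      rw [show B + 1 - 1 - 0 = B by omega]
      rw [hM]
      ring
    rw [h3]
    ring
  have h4 : (∑ j ∈ Finset.range A, s (2 * (x + (A : ZMod n) + ((B + 1 + j : ℕ) : ZMod n))))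
      = ∑ j ∈ Finset.range A, s (2 * (x + (M : ZMod n)) + ((2 * (j + 1) : ℕ) : ZMod n)) := by
    apply Finset.sum_congr rfl
    intro j hj
    congr 1
    push_cast [hM]
    ring
  rw [h1, h4]
  ring


/-- In the pizza game on a pizza with an odd number of pieces, Alice has a
strategy guaranteeing her at least one third of the total size. -/
theorem stmt2 (n : ℕ) [NeZero n] (hn : Odd n) (s : ZMod n → ℝ)
    (hs : ∀ i, 0 ≤ s i) :
    ∃ (p : ZMod n) (σ : List Bool → Bool), ∀ τ : List Bool → Bool,
      (∑ i, s i) / 3 ≤ aliceOutcome n s p σ τ := by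
  obtain ⟨M, hM⟩ := hn
  have hn2 : n = 2 * M + 1 := by omega
  have hs'0 : ∀ i : ZMod n, 0 ≤ (fun y : ZMod n => s (2 * y)) i := fun i => hs _
  obtain ⟨x, hx⟩ := window_main n M hn2 (fun y : ZMod n => s (2 * y)) hs'0
  have hu : IsUnit (2 : ZMod n) := by
    have h2 : ((2 : ℕ) : ZMod n) = 2 := by push_cast; ring
    rw [← h2, ZMod.isUnit_iff_coprime]
    exact Nat.coprime_two_left.mpr ⟨M, hM⟩
  have hsum : (∑ i : ZMod n, s (2 * i)) = ∑ i, s i := by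
    obtain ⟨u, hu2⟩ := hu
    have hbij : Function.Bijective (fun y : ZMod n => 2 * y) := by
      have := u.mulLeft_bijective
      simpa [hu2] using this
    exact Fintype.sum_bijective _ hbij _ s (fun y => rfl)
  refine ⟨2 * (x + (M : ZMod n)), followBob, fun τ => ?_⟩
  obtain ⟨A, C, hAC, hout⟩ := outcome_eq n M hn2 s (2 * (x + (M : ZMod n))) τ
  rw [hout, ← window_eq n M s x A C hAC]
  have h5 := hx A (by omega)
  calc (∑ i, s i) / 3 = (∑ i : ZMod n, s (2 * i)) / 3 := by rw [hsum]
    _ ≤ Wsum M (fun y : ZMod n => s (2 * y)) (x + (A : ZMod n)) := h5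
end

section
/- If an odd pizza has two neighboring cuts C, C' (enclosing a single piece p between them) that are both best answers (each minimizes ‖R(·)‖ over cuts whose red class contains some fixed piece and is a best answer in the game-theoretic sense), then R(C) ∪ R(C') is the whole pizza, and hence max(‖R(C)‖, ‖R(C')‖) ≥ half the total size; consequently Alice has a follow-Bob strategy eating at least half of the pizza. -/
/-- Total size of the red pieces `R(C)` of the almost alternating coloring
induced by the cut `C`: piece `i` is red iff `(i - C).val` is even. -/
noncomputable def redSize (n : ℕ) [NeZero n] (s : ZMod n → ℝ) (C : ZMod n) : ℝ :=
  ∑ i : ZMod n, if Even ((i - C).val) then s i else 0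

open Finset in
lemma parity_cover {n : ℕ} [NeZero n] (i C : ZMod n) :
    Even ((i - C).val) ∨ Even ((i - (C + 1)).val) := by
  set a := i - C with ha
  by_cases h0 : a = 0
  · left; simp [h0]
  · have hval : a.val ≠ 0 := by simpa [ZMod.val_eq_zero] using h0
    have hlt : a.val < n := ZMod.val_lt a
    have hsub : i - (C + 1) = a - 1 := by rw [ha]; ring
    have hcast : (a : ZMod n) - 1 = ((a.val - 1 : ℕ) : ZMod n) := by
      have h5 : ((a.val : ℕ) : ZMod n) = a := by simp [ZMod.natCast_val, ZMod.cast_id]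
      rw [Nat.cast_sub (by omega)]
      simp [h5]
    have hv2 : (a - 1).val = a.val - 1 := by
      rw [hcast, ZMod.val_cast_of_lt (by omega)]
    rcases Nat.even_or_odd a.val with he | ho
    · left; exact he
    · right; rw [hsub, hv2]
      rcases ho with ⟨m, hm⟩; exact ⟨m, by omega⟩

open Finset in
lemma choice_odd (τ : List Bool → Bool) (k : ℕ) :
    choice followBob τ (2*k+1) = choice followBob τ (2*k) := by
  have hodd : ¬ Even (2*k+1) := by rw [Nat.even_iff]; omega
  have h1 : hist followBob τ (2*k+1) =
      hist followBob τ (2*k) ++ [choice followBob τ (2*k)] := rfl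
  rw [choice, if_neg hodd, h1, followBob]
  simp

open Finset in
lemma count_double (d : ℕ → Bool) (hd : ∀ k, d (2*k+1) = d (2*k)) (v : Bool) :
    ∀ m, (((range (2*m)).filter fun i => d i = v).card)
        = 2 * (((range m).filter fun j => d (2*j) = v).card) := by
  intro m
  induction m with
  | zero => simp
  | succ m ih =>
      have h2 : 2*(m+1) = (2*m).succ.succ := by omega
      rw [h2, Finset.range_add_one, Finset.range_add_one, Finset.filter_insert, Finset.filter_insert,
        Finset.range_add_one, Finset.filter_insert]
      have hds : d (Nat.succ (2*m)) = d (2*m) := hd m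
      by_cases h : d (2*m) = v
      · rw [if_pos (by rw [hds]; exact h), if_pos h, if_pos h,
          Finset.card_insert_of_notMem (by intro hmem; simp at hmem),
          Finset.card_insert_of_notMem (by intro hmem; simp at hmem),
          Finset.card_insert_of_notMem (by intro hmem; simp at hmem), ih]
        ring
      · rw [if_neg (by rw [hds]; exact h), if_neg h, if_neg h, ih]

open Finset in
lemma sum_range_odd (g : ℕ → ℝ) (M : ℕ) :
    ∑ t ∈ range (2*M+1), g t = g 0 + ∑ k ∈ range M, (g (2*k+1) + g (2*k+2)) := by
  induction M with
  | zero => simp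
  | succ M ih =>
      have h2 : 2*(M+1)+1 = (2*M+1)+1+1 := by omega
      rw [h2, Finset.sum_range_succ, Finset.sum_range_succ, ih, Finset.sum_range_succ]
      ring

open Finset in
lemma redSize_eq (M : ℕ) (s : ZMod (2*M+1) → ℝ) (D : ZMod (2*M+1)) :
    redSize (2*M+1) s D = ∑ j ∈ range (M+1), s (D + ((2*j : ℕ) : ZMod (2*M+1))) := by
  have hinj : ∀ j1 ∈ range (M+1), ∀ j2 ∈ range (M+1),
      D + ((2*j1 : ℕ) : ZMod (2*M+1)) = D + ((2*j2 : ℕ) : ZMod (2*M+1)) → j1 = j2 := by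
    intro j1 h1 j2 h2 h
    simp only [mem_range] at h1 h2
    have h3 : ((2*j1 : ℕ) : ZMod (2*M+1)) = ((2*j2 : ℕ) : ZMod (2*M+1)) :=
      add_left_cancel h
    have := congrArg ZMod.val h3
    rw [ZMod.val_cast_of_lt (by omega), ZMod.val_cast_of_lt (by omega)] at this
    omega
  have himg : (range (M+1)).image (fun j => D + ((2*j : ℕ) : ZMod (2*M+1)))
      = Finset.univ.filter (fun i : ZMod (2*M+1) => Even ((i - D).val)) := by
    ext i
    simp only [mem_image, mem_filter, mem_range, mem_univ, true_and]
    constructor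
    · rintro ⟨j, hj, rfl⟩
      have h4 : (D + ((2*j : ℕ) : ZMod (2*M+1)) - D) = ((2*j : ℕ) : ZMod (2*M+1)) := by ring
      rw [h4, ZMod.val_cast_of_lt (by omega)]
      exact ⟨j, by omega⟩
    · rintro ⟨m, hm⟩
      have hvlt : (i - D).val < 2*M+1 := ZMod.val_lt _
      refine ⟨m, by omega, ?_⟩
      have h5 : (((i - D).val : ℕ) : ZMod (2*M+1)) = i - D := by
        simp [ZMod.natCast_val, ZMod.cast_id]
      rw [show 2*m = (i-D).val by omega, h5]
      ring
  rw [redSize, ← Finset.sum_filter, ← himg, Finset.sum_image hinj]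

open Finset in
lemma followBob_outcome (M : ℕ) (s : ZMod (2*M+1) → ℝ) (p : ZMod (2*M+1))
    (τ : List Bool → Bool) :
    ∃ D : ZMod (2*M+1), Even ((p - D).val) ∧
      aliceOutcome (2*M+1) s p followBob τ = redSize (2*M+1) s D := by
  set d : ℕ → Bool := choice followBob τ with hdd
  have hd : ∀ k, d (2*k+1) = d (2*k) := choice_odd τ
  set a : ℕ → ℕ := fun k => ((range k).filter fun j => d (2*j) = true).card with haa
  set c : ℕ → ℕ := fun k => ((range k).filter fun j => d (2*j) = false).card with hcc
  have ha_succ : ∀ k, a (k+1) = if d (2*k) then a k + 1 else a k := by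
    intro k
    simp only [haa, Finset.range_add_one, Finset.filter_insert]
    by_cases h : d (2*k) = true
    · rw [if_pos h, if_pos (by simp [h]),
        Finset.card_insert_of_notMem (by intro hmem; simp at hmem)]
    · rw [if_neg h, if_neg (by simpa using h)]
  have hc_succ : ∀ k, c (k+1) = if d (2*k) then c k else c k + 1 := by
    intro k
    simp only [hcc, Finset.range_add_one, Finset.filter_insert]
    by_cases h : d (2*k) = true
    · rw [if_neg (by simp [h]), if_pos h]
    · rw [if_pos (by simpa using h), if_neg h,
        Finset.card_insert_of_notMem (by intro hmem; simp at hmem)]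
  have hac : ∀ k, a k + c k = k := by
    intro k
    induction k with
    | zero => simp [haa, hcc]
    | succ k ih =>
        rw [ha_succ, hc_succ]
        by_cases h : d (2*k) = true
        · rw [if_pos h, if_pos h]; omega
        · rw [if_neg h, if_neg h]; omega
  have hamono : ∀ k l, k ≤ l → a k ≤ a l := fun k l h =>
    Finset.card_le_card (Finset.filter_subset_filter _ (Finset.range_subset_range.2 h))
  have hcmono : ∀ k l, k ≤ l → c k ≤ c l := fun k l h =>
    Finset.card_le_card (Finset.filter_subset_filter _ (Finset.range_subset_range.2 h))
  set o : ℕ → ℕ := fun k => if k = 0 then c M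
      else if d (2*(k-1)) then c M + a k else c M - c k with hoo
  have ho0 : o 0 = c M := by simp [hoo]
  have ho_succ : ∀ k, o (k+1) = if d (2*k) then c M + a (k+1) else c M - c (k+1) := by
    intro k; simp [hoo]
  have hpiece : ∀ k, piece (2*M+1) p d (2*k+2) =
      if d (2*k) then p + ((2 * a (k+1) : ℕ) : ZMod (2*M+1))
      else p - ((2 * c (k+1) : ℕ) : ZMod (2*M+1)) := by
    intro k
    have h1 : piece (2*M+1) p d ((2*k+1)+1) =
        if d (2*k+1) then
          p + ((((range (2*(k+1))).filter fun i => d i = true).card : ℕ) : ZMod (2*M+1))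
        else
          p - ((((range (2*(k+1))).filter fun i => d i = false).card : ℕ) : ZMod (2*M+1)) := rfl
    rw [show 2*k+2 = (2*k+1)+1 by ring, h1, hd k,
      count_double d hd true (k+1), count_double d hd false (k+1)]
  set D : ZMod (2*M+1) := p - ((2 * c M : ℕ) : ZMod (2*M+1)) with hDD
  have hval : ∀ k ∈ range (M+1), piece (2*M+1) p d (2*k) = D + ((2 * o k : ℕ) : ZMod (2*M+1)) := by
    intro k hk
    simp only [mem_range] at hk
    cases k with
    | zero =>
        have h0 : piece (2*M+1) p d (2*0) = p := rfl
        rw [h0, ho0, hDD]; push_cast; ring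
    | succ k =>
        have hkM : k + 1 ≤ M := by omega
        rw [show 2*(k+1) = 2*k+2 by ring, hpiece k, ho_succ k]
        by_cases h : d (2*k) = true
        · rw [if_pos h, if_pos h, hDD]; push_cast; ring
        · rw [if_neg h, if_neg h, hDD]
          have hle : c (k+1) ≤ c M := hcmono _ _ hkM
          rw [show 2 * (c M - c (k+1)) = 2 * c M - 2 * c (k+1) by omega,
            Nat.cast_sub (by omega)]
          push_cast; ring
  have hf1 : ∀ k, d (2*k) = true → a (k+1) = a k + 1 := fun k h => by
    rw [ha_succ, if_pos h]
  have hf2 : ∀ k, ¬ (d (2*k) = true) → c (k+1) = c k + 1 := fun k h => by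
    rw [hc_succ, if_neg h]
  have ho_mem : ∀ k ∈ range (M+1), o k ∈ range (M+1) := by
    intro k hk
    simp only [mem_range] at hk ⊢
    have hacM := hac M
    cases k with
    | zero => rw [ho0]; omega
    | succ k =>
        rw [ho_succ]
        have h1 : a (k+1) ≤ a M := hamono _ _ (by omega)
        by_cases h : d (2*k) = true
        · rw [if_pos h]; omega
        · rw [if_neg h]; omega
  have ho_inj : ∀ k1 ∈ range (M+1), ∀ k2 ∈ range (M+1), o k1 = o k2 → k1 = k2 := by
    intro k1 hk1 k2 hk2 heq
    simp only [mem_range] at hk1 hk2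
    cases k1 with
    | zero =>
      cases k2 with
      | zero => rfl
      | succ l =>
        exfalso
        rw [ho0, ho_succ] at heq
        have hle : c (l+1) ≤ c M := hcmono _ _ (by omega)
        by_cases h : d (2*l) = true
        · rw [if_pos h] at heq; have := hf1 l h; omega
        · rw [if_neg h] at heq; have h1 := hf2 l h
          have := hcmono l (l+1) (by omega); omega
    | succ k =>
      cases k2 with
      | zero =>
        exfalso
        rw [ho0, ho_succ] at heq
        have hle : c (k+1) ≤ c M := hcmono _ _ (by omega)
        by_cases h : d (2*k) = true
        · rw [if_pos h] at heq; have := hf1 k h; omega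
        · rw [if_neg h] at heq; have h1 := hf2 k h
          have := hcmono k (k+1) (by omega); omega
      | succ l =>
        rw [ho_succ, ho_succ] at heq
        have hlek : c (k+1) ≤ c M := hcmono _ _ (by omega)
        have hlel : c (l+1) ≤ c M := hcmono _ _ (by omega)
        by_cases h1 : d (2*k) = true <;> by_cases h2 : d (2*l) = true
        · rw [if_pos h1, if_pos h2] at heq
          have hk' := hf1 k h1
          have hl' := hf1 l h2
          rcases lt_trichotomy k l with hlt | hEq | hgt
          · have := hamono (k+1) l hlt; omega
          · omega
          · have := hamono (l+1) k hgt; omega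
        · rw [if_pos h1, if_neg h2] at heq
          have := hf1 k h1; have := hf2 l h2; omega
        · rw [if_neg h1, if_pos h2] at heq
          have := hf2 k h1; have := hf1 l h2; omega
        · rw [if_neg h1, if_neg h2] at heq
          have hk' := hf2 k h1
          have hl' := hf2 l h2
          rcases lt_trichotomy k l with hlt | hEq | hgt
          · have := hcmono (k+1) l hlt; omega
          · omega
          · have := hcmono (l+1) k hgt; omega
  have hcMle : c M ≤ M := by have := hac M; omega
  have hmain : aliceOutcome (2*M+1) s p followBob τ = redSize (2*M+1) s D := by
    have h0 : aliceOutcome (2*M+1) s p followBob τ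
        = ∑ t ∈ range (2*M+1), (if Even t then s (piece (2*M+1) p d t) else 0) := rfl
    rw [h0, sum_range_odd]
    have hsimp : ∀ k ∈ range M, ((if Even (2*k+1) then s (piece (2*M+1) p d (2*k+1)) else 0)
        + (if Even (2*k+2) then s (piece (2*M+1) p d (2*k+2)) else 0))
        = s (piece (2*M+1) p d (2*k+2)) := by
      intro k _
      rw [if_neg (by rw [Nat.even_iff]; omega), if_pos ⟨k+1, by ring⟩, zero_add]
    rw [Finset.sum_congr rfl hsimp, if_pos Even.zero]
    have h2 : ∑ k ∈ range (M+1), s (piece (2*M+1) p d (2*k))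
        = s (piece (2*M+1) p d 0) + ∑ k ∈ range M, s (piece (2*M+1) p d (2*k+2)) := by
      rw [Finset.sum_range_succ']
      simp only [Nat.mul_succ, Nat.mul_zero]
      ring
    rw [← h2, Finset.sum_congr rfl (fun k hk => congrArg s (hval k hk)),
      ← Finset.sum_image (s := range (M+1)) (g := o)
        (f := fun j => s (D + ((2*j : ℕ) : ZMod (2*M+1)))) ho_inj]
    have h3 : (range (M+1)).image o = range (M+1) :=
      Finset.eq_of_subset_of_card_le
        (fun x hx => by
          obtain ⟨k, hk, rfl⟩ := Finset.mem_image.1 hx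
          exact ho_mem k hk)
        (le_of_eq (Finset.card_image_of_injOn ho_inj).symm)
    rw [h3, redSize_eq M s D]
  refine ⟨D, ?_, hmain⟩
  have hpD : p - D = ((2 * c M : ℕ) : ZMod (2*M+1)) := by rw [hDD]; ring
  rw [hpD, ZMod.val_cast_of_lt (by omega)]
  exact ⟨c M, by ring⟩

/-- If two neighboring cuts `C` and `C + 1` of an odd pizza (enclosing the
single piece between them) are both best answers (to pieces `q` resp. `q'`),
then `R(C) ∪ R(C+1)` is the whole pizza, hence the larger of `‖R(C)‖` and
`‖R(C+1)‖` is at least half the total size; consequently Alice has a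
follow-Bob strategy eating at least half of the pizza. -/
theorem stmt10 (n : ℕ) [NeZero n] (hn : Odd n) (s : ZMod n → ℝ) (hs : ∀ i, 0 ≤ s i)
    (C q q' : ZMod n)
    (hq : Even ((q - C).val))
    (hbestC : ∀ D : ZMod n, Even ((q - D).val) → redSize n s C ≤ redSize n s D)
    (hq' : Even ((q' - (C + 1)).val))
    (hbestC' : ∀ D : ZMod n, Even ((q' - D).val) → redSize n s (C + 1) ≤ redSize n s D) :
    (∀ i : ZMod n, Even ((i - C).val) ∨ Even ((i - (C + 1)).val)) ∧
    (∑ i, s i) / 2 ≤ max (redSize n s C) (redSize n s (C + 1)) ∧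
    ∃ p : ZMod n, ∀ τ : List Bool → Bool,
      (∑ i, s i) / 2 ≤ aliceOutcome n s p followBob τ := by
  obtain ⟨M, hM⟩ := hn
  have hM' : n = 2*M+1 := by omega
  subst hM'
  have hcov : ∀ i : ZMod (2*M+1), Even ((i - C).val) ∨ Even ((i - (C+1)).val) :=
    fun i => parity_cover i C
  have hsum : (∑ i, s i) ≤ redSize (2*M+1) s C + redSize (2*M+1) s (C+1) := by
    rw [redSize, redSize, ← Finset.sum_add_distrib]
    refine Finset.sum_le_sum fun i _ => ?_
    rcases hcov i with h | h
    · rw [if_pos h]; split_ifs <;> linarith [hs i]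
    · rw [if_pos h]; split_ifs <;> linarith [hs i]
  have hmax : (∑ i, s i)/2 ≤ max (redSize (2*M+1) s C) (redSize (2*M+1) s (C+1)) := by
    rcases le_total (redSize (2*M+1) s C) (redSize (2*M+1) s (C+1)) with h | h
    · rw [max_eq_right h]; linarith
    · rw [max_eq_left h]; linarith
  refine ⟨hcov, hmax, ?_⟩
  rcases le_total (redSize (2*M+1) s C) (redSize (2*M+1) s (C+1)) with h | h
  · refine ⟨q', fun τ => ?_⟩
    obtain ⟨D, hD, hout⟩ := followBob_outcome M s q' τ
    rw [hout]
    have h1 := hbestC' D hD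
    have h2 : max (redSize (2*M+1) s C) (redSize (2*M+1) s (C+1))
        = redSize (2*M+1) s (C+1) := max_eq_right h
    linarith
  · refine ⟨q, fun τ => ?_⟩
    obtain ⟨D, hD, hout⟩ := followBob_outcome M s q τ
    rw [hout]
    have h1 := hbestC D hD
    have h2 : max (redSize (2*M+1) s C) (redSize (2*M+1) s (C+1))
        = redSize (2*M+1) s C := max_eq_left h
    linarith
end
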